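/- Let R be a commutative Bezout domain and S = S(R) the saturated multiplicative set of elements a with R/aR of stable range 1. Then R is an elementary divisor ring if and only if the localization R_S is an elementary divisor ring. -/

import Mathlib

def HasStableRange1 (R : Type*) [CommRing R] : Prop :=
  ∀ a b : R, Ideal.span {a, b} = ⊤ → ∃ t : R, IsUnit (a + b * t)

def IsElementaryDivisorRing (R : Type*) [CommRing R] : Prop :=
  ∀ a b c : R, Ideal.span {a, b, c} = ⊤ →
    ∃ p q : R, Ideal.span {a * p, b * p + c * q} = ⊤

section MyEDRAux

variable {R : Type*} [CommRing R]

theorem myEDR_span_pair_iff {u v : R} :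
    Ideal.span ({u, v} : Set R) = ⊤ ↔ ∃ x y : R, x * u + y * v = 1 := by
  rw [Ideal.eq_top_iff_one, Ideal.mem_span_pair]

theorem myEDR_span_triple_iff {u v w : R} :
    Ideal.span ({u, v, w} : Set R) = ⊤ ↔ ∃ x y z : R, x * u + y * v + z * w = 1 := by
  rw [Ideal.eq_top_iff_one]
  constructor
  · intro h
    rw [Ideal.mem_span_insert] at h
    obtain ⟨x, z', hz', h1⟩ := h
    obtain ⟨y, z, hyz⟩ := Ideal.mem_span_pair.mp hz'
    exact ⟨x, y, z, by linear_combination hyz - h1⟩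
  · rintro ⟨x, y, z, h⟩
    rw [Ideal.mem_span_insert]
    exact ⟨x, y * v + z * w, Ideal.mem_span_pair.mpr ⟨y, z, rfl⟩, by linear_combination -h⟩

theorem myEDR_sr1_surj {A B : Type*} [CommRing A] [CommRing B]
    (f : A →+* B) (hf : Function.Surjective f) (h : HasStableRange1 A) :
    HasStableRange1 B := by
  intro b₁ b₂ hb
  obtain ⟨u, v, huv⟩ := myEDR_span_pair_iff.mp hb
  obtain ⟨a₁, ha₁⟩ := hf b₁
  obtain ⟨a₂, ha₂⟩ := hf b₂
  obtain ⟨u', hu'⟩ := hf u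
  obtain ⟨v', hv'⟩ := hf v
  have hfk : f (1 - (u' * a₁ + v' * a₂)) = 0 := by
    simp only [map_sub, map_add, map_mul, map_one, hu', hv', ha₁, ha₂]
    rw [huv, sub_self]
  have htop : Ideal.span {a₁, v' * a₂ + (1 - (u' * a₁ + v' * a₂))} = ⊤ :=
    myEDR_span_pair_iff.mpr ⟨u', 1, by ring⟩
  obtain ⟨t, ht⟩ := h a₁ (v' * a₂ + (1 - (u' * a₁ + v' * a₂))) htop
  refine ⟨f (v' * t), ?_⟩
  have hmap := ht.map f
  have heq : f (a₁ + (v' * a₂ + (1 - (u' * a₁ + v' * a₂))) * t) = b₁ + b₂ * f (v' * t) := by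
    simp only [map_add, map_mul, hfk, ha₁, ha₂, hv']
    ring
  rwa [heq] at hmap

theorem myEDR_sr1_factor {z d : R}
    (hle : Ideal.span ({z} : Set R) ≤ Ideal.span ({d} : Set R))
    (h : HasStableRange1 (R ⧸ Ideal.span ({z} : Set R))) :
    HasStableRange1 (R ⧸ Ideal.span ({d} : Set R)) := by
  refine myEDR_sr1_surj (Ideal.Quotient.factor hle) ?_ h
  intro x
  obtain ⟨r, rfl⟩ := Ideal.Quotient.mk_surjective x
  exact ⟨Ideal.Quotient.mk _ r, Ideal.Quotient.factor_mk hle r⟩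

theorem myEDR_hint (z xx yy : R)
    (hsr : HasStableRange1 (R ⧸ Ideal.span ({z} : Set R)))
    (h : ∃ u v w : R, u * z + v * xx + w * yy = 1) :
    ∃ lam X Y : R, X * z + Y * (xx + yy * lam) = 1 := by
  obtain ⟨u, v, w, huvw⟩ := h
  have hz0 : Ideal.Quotient.mk (Ideal.span ({z} : Set R)) z = 0 :=
    Ideal.Quotient.eq_zero_iff_mem.mpr (Ideal.subset_span rfl)
  have htop : Ideal.span {Ideal.Quotient.mk (Ideal.span ({z} : Set R)) xx,
      Ideal.Quotient.mk (Ideal.span ({z} : Set R)) yy} = ⊤ := by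
    apply myEDR_span_pair_iff.mpr
    refine ⟨Ideal.Quotient.mk _ v, Ideal.Quotient.mk _ w, ?_⟩
    have h2 := congrArg (Ideal.Quotient.mk (Ideal.span ({z} : Set R))) huvw
    simp only [map_add, map_mul, map_one] at h2
    rw [hz0] at h2
    linear_combination h2
  obtain ⟨t, ht⟩ := hsr _ _ htop
  obtain ⟨lam, rfl⟩ := Ideal.Quotient.mk_surjective t
  obtain ⟨uu, huu⟩ := ht
  obtain ⟨s, hs⟩ := Ideal.Quotient.mk_surjective (↑uu⁻¹ : R ⧸ Ideal.span ({z} : Set R))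
  have h1 : Ideal.Quotient.mk (Ideal.span ({z} : Set R)) (s * (xx + yy * lam) - 1) = 0 := by
    simp only [map_sub, map_mul, map_add, map_one]
    rw [hs, ← huu, Units.inv_mul, sub_self]
  rw [Ideal.Quotient.eq_zero_iff_mem, Ideal.mem_span_singleton] at h1
  obtain ⟨mm, hmm⟩ := h1
  exact ⟨lam, -mm, s, by linear_combination hmm⟩

def MyEDRSol (a b c : R) : Prop :=
  ∃ p q x y : R, x * (a * p) + y * (b * p + c * q) = 1

theorem myEDR_sol_mul_all {a b c u : R} (hu : IsUnit u) (h : MyEDRSol a b c) :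
    MyEDRSol (u * a) (u * b) (u * c) := by
  obtain ⟨p, q, x, y, hs⟩ := h
  obtain ⟨w, hw⟩ := hu.exists_right_inv
  exact ⟨p, q, x * w, y * w, by linear_combination (u * w) * hs + hw⟩

theorem myEDR_sol_of_mul_left {a b c u : R} (h : MyEDRSol (a * u) b c) :
    MyEDRSol a b c := by
  obtain ⟨p, q, x, y, hs⟩ := h
  exact ⟨p, q, x * u, y, by linear_combination hs⟩

theorem myEDR_sol_of_mul_mid {a b c u : R} (hu : IsUnit u) (h : MyEDRSol a (b * u) c) :
    MyEDRSol a b c := by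
  obtain ⟨p, q, x, y, hs⟩ := h
  obtain ⟨w, hw⟩ := hu.exists_right_inv
  exact ⟨u * p, q, x * w, y, by linear_combination hs + (x * (a * p)) * hw⟩

theorem myEDR_sol_of_mul_right {a b c u : R} (h : MyEDRSol a b (c * u)) :
    MyEDRSol a b c := by
  obtain ⟨p, q, x, y, hs⟩ := h
  exact ⟨p, u * q, x, y, by linear_combination hs⟩

theorem myEDR_key [IsDomain R] [IsBezout R] (a b c p q z : R)
    (hz : ∃ x₀ y₀ : R, x₀ * (a * p) + y₀ * (b * p + c * q) = z)
    (hz0 : z ≠ 0)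
    (hsr : HasStableRange1 (R ⧸ Ideal.span ({z} : Set R)))
    (habc : ∃ r s t : R, r * a + s * b + t * c = 1) :
    ∃ p' q' : R, Ideal.span {a * p', b * p' + c * q'} = ⊤ := by
  obtain ⟨x₀, y₀, hz⟩ := hz
  set g := IsBezout.gcd p q with hgdef
  obtain ⟨p₀, hp⟩ : g ∣ p := IsBezout.gcd_dvd_left p q
  obtain ⟨q₀, hq⟩ : g ∣ q := IsBezout.gcd_dvd_right p q
  have hg0 : g ≠ 0 := by
    intro h0
    apply hz0
    rw [h0] at hp hq
    rw [← hz, hp, hq]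
    ring
  obtain ⟨k₁, l₁, hkl₁⟩ := IsBezout.gcd_eq_sum p q
  have hkl : p₀ * k₁ + q₀ * l₁ = 1 := by
    apply mul_left_cancel₀ hg0
    linear_combination hkl₁ - k₁ * hp - l₁ * hq
  set k := k₁
  set l := l₁
  set d := IsBezout.gcd (a * p₀) (b * p₀ + c * q₀) with hddef
  obtain ⟨A, hA⟩ : d ∣ a * p₀ := IsBezout.gcd_dvd_left _ _
  obtain ⟨B, hB⟩ : d ∣ b * p₀ + c * q₀ := IsBezout.gcd_dvd_right _ _
  have hdz : d ∣ z :=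
    ⟨g * (x₀ * A + y₀ * B), by
      linear_combination -hz + (x₀ * a + y₀ * b) * hp + (y₀ * c) * hq + (x₀ * g) * hA +
        (y₀ * g) * hB⟩
  have hd0 : d ≠ 0 := by
    intro h0
    apply hz0
    rcases hdz with ⟨w, hw⟩
    rw [hw, h0, zero_mul]
  obtain ⟨X₁, Y₁, hXY₁⟩ := IsBezout.gcd_eq_sum (a * p₀) (b * p₀ + c * q₀)
  have hxy : A * X₁ + B * Y₁ = 1 := by
    apply mul_left_cancel₀ hd0
    linear_combination hXY₁ - X₁ * hA - Y₁ * hB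
  set x := X₁
  set y := Y₁
  have hsr' : HasStableRange1 (R ⧸ Ideal.span ({d} : Set R)) :=
    myEDR_sr1_factor (Ideal.span_singleton_le_span_singleton.mpr hdz) hsr
  have ia : a = A * d * k - q₀ * (A * (c * k * y - b * l * y - a * l * x) -
      y * (a * l * B + c * k * A - b * l * A)) := by
    linear_combination (k * (A * x + B * y)) * hA + (k * A * d - a * (p₀ * k + q₀ * l)) * hxy +
      (-a) * hkl
  have ib : b = B * d * k - q₀ * (B * (c * k * y - b * l * y - a * l * x) +
      x * (a * l * B + c * k * A - b * l * A)) := by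
    linear_combination (k * (A * x + B * y)) * hB + (B * k * d - b * (p₀ * k + q₀ * l)) * hxy +
      (-b) * hkl
  have ic : c = B * d * l + p₀ * (B * (c * k * y - b * l * y - a * l * x) +
      x * (a * l * B + c * k * A - b * l * A)) := by
    linear_combination (l * (A * x + B * y)) * hB + (B * l * d - c * (p₀ * k + q₀ * l)) * hxy +
      (-c) * hkl
  obtain ⟨r, s, t, hrst⟩ := habc
  have hcombo : ∃ u v w : R, u * d + v * (c * k * y - b * l * y - a * l * x) +
      w * (a * l * B + c * k * A - b * l * A) = 1 :=
    ⟨r * (A * k) + s * (B * k) + t * (B * l),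
     -(r * (q₀ * A)) - s * (q₀ * B) + t * (p₀ * B),
     r * (q₀ * y) - s * (q₀ * x) + t * (p₀ * x),
     by linear_combination hrst - r * ia - s * ib - t * ic⟩
  obtain ⟨lam, X, Y, h5⟩ := myEDR_hint d _ _ hsr' hcombo
  obtain ⟨d₂, hd2⟩ : IsBezout.gcd d (a * l * B + c * k * A - b * l * A) ∣ d :=
    IsBezout.gcd_dvd_left _ _
  obtain ⟨δ₂, hδ2⟩ : IsBezout.gcd d (a * l * B + c * k * A - b * l * A) ∣
      (a * l * B + c * k * A - b * l * A) := IsBezout.gcd_dvd_right _ _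
  have h6 : (a * l * B + c * k * A - b * l * A) * d₂ = δ₂ * d := by
    linear_combination d₂ * hδ2 - δ₂ * hd2
  refine ⟨p₀ * (X - Y * δ₂) - l * Y, q₀ * (X - Y * δ₂) + k * Y,
    myEDR_span_pair_iff.mpr ⟨x - (lam + d₂) * B, y + (lam + d₂) * A, ?_⟩⟩
  linear_combination ((X - Y * δ₂) * (x - (lam + d₂) * B)) * hA +
    ((X - Y * δ₂) * (y + (lam + d₂) * A)) * hB + ((X - Y * δ₂) * d) * hxy + h5 + Y * h6

end MyEDRAux

theorem stmt14 {R : Type*} [CommRing R] [IsDomain R] [IsBezout R]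
    (S : Submonoid R)
    (hS : ∀ a : R, a ∈ S ↔ HasStableRange1 (R ⧸ Ideal.span ({a} : Set R))) :
    IsElementaryDivisorRing R ↔ IsElementaryDivisorRing (Localization S) := by
  set f := algebraMap R (Localization S) with hfdef
  constructor
  · -- forward: R EDR → Localization EDR
    intro hR A' B' C' htop
    obtain ⟨U, V, W, hUVW⟩ := myEDR_span_triple_iff.mp htop
    obtain ⟨⟨a₀, sa⟩, hA⟩ := IsLocalization.surj (M := S) A'
    obtain ⟨⟨b₀, sb⟩, hB⟩ := IsLocalization.surj (M := S) B'
    obtain ⟨⟨c₀, sc⟩, hC⟩ := IsLocalization.surj (M := S) C'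
    have key1 : (U * (f ↑sb * f ↑sc)) * f a₀ + (V * (f ↑sa * f ↑sc)) * f b₀ +
        (W * (f ↑sa * f ↑sb)) * f c₀ = f ↑sa * f ↑sb * f ↑sc := by
      linear_combination (f ↑sa * f ↑sb * f ↑sc) * hUVW - (U * (f ↑sb * f ↑sc)) * hA -
        (V * (f ↑sa * f ↑sc)) * hB - (W * (f ↑sa * f ↑sb)) * hC
    obtain ⟨⟨u₀, su⟩, hU⟩ := IsLocalization.surj (M := S) U
    obtain ⟨⟨v₀, sv⟩, hV⟩ := IsLocalization.surj (M := S) V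
    obtain ⟨⟨w₀, sw⟩, hW⟩ := IsLocalization.surj (M := S) W
    have key2 : f (u₀ * (↑sv * ↑sw) * (↑sb * ↑sc) * a₀ + v₀ * (↑su * ↑sw) * (↑sa * ↑sc) * b₀ +
        w₀ * (↑su * ↑sv) * (↑sa * ↑sb) * c₀) = f (↑su * ↑sv * ↑sw * (↑sa * ↑sb * ↑sc)) := by
      simp only [map_add, map_mul]
      linear_combination (f ↑su * f ↑sv * f ↑sw) * key1 -
        (f ↑sv * f ↑sw * f ↑sb * f ↑sc * f a₀) * hU -
        (f ↑su * f ↑sw * f ↑sa * f ↑sc * f b₀) * hV -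
        (f ↑su * f ↑sv * f ↑sa * f ↑sb * f c₀) * hW
    obtain ⟨m, hm⟩ := (IsLocalization.eq_iff_exists (M := S) (S := Localization S)).mp key2
    set tS : S := m * (su * sv * sw * (sa * sb * sc)) with htS
    have ht : (↑m * (u₀ * (↑sv * ↑sw) * (↑sb * ↑sc))) * a₀ +
        (↑m * (v₀ * (↑su * ↑sw) * (↑sa * ↑sc))) * b₀ +
        (↑m * (w₀ * (↑su * ↑sv) * (↑sa * ↑sb))) * c₀ = (tS : R) := by
      simp only [htS, Submonoid.coe_mul]
      linear_combination hm
    -- gcd of a₀ b₀ c₀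
    set g₁ := IsBezout.gcd b₀ c₀ with hg₁def
    set g := IsBezout.gcd a₀ g₁ with hgdef
    obtain ⟨a₁, ha₁⟩ : g ∣ a₀ := IsBezout.gcd_dvd_left _ _
    have hgg₁ : g ∣ g₁ := IsBezout.gcd_dvd_right _ _
    obtain ⟨b₁, hb₁⟩ : g ∣ b₀ := hgg₁.trans (IsBezout.gcd_dvd_left _ _)
    obtain ⟨c₁, hc₁⟩ : g ∣ c₀ := hgg₁.trans (IsBezout.gcd_dvd_right _ _)
    have hgt : g ∣ (tS : R) := by
      rw [← ht]
      exact dvd_add (dvd_add (Dvd.dvd.mul_left ⟨a₁, ha₁⟩ _) (Dvd.dvd.mul_left ⟨b₁, hb₁⟩ _))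
        (Dvd.dvd.mul_left ⟨c₁, hc₁⟩ _)
    by_cases hg0 : g = 0
    · -- then t = 0 ∈ S, localization is trivial
      obtain ⟨e, he⟩ := hgt
      have ht0 : (tS : R) = 0 := by rw [he, hg0, zero_mul]
      have hunit : IsUnit (f (tS : R)) := IsLocalization.map_units (Localization S) tS
      rw [ht0, map_zero] at hunit
      rw [isUnit_zero_iff] at hunit
      refine ⟨0, 0, ?_⟩
      rw [Ideal.eq_top_iff_one, ← hunit]
      exact Ideal.zero_mem _
    · obtain ⟨α, β, hαβ⟩ := IsBezout.gcd_eq_sum a₀ g₁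
      obtain ⟨β₂, γ₂, hβγ⟩ := IsBezout.gcd_eq_sum b₀ c₀
      have hgc : α * a₀ + (β * β₂) * b₀ + (β * γ₂) * c₀ = g := by
        linear_combination hαβ + β * hβγ
      have combo1 : α * a₁ + (β * β₂) * b₁ + (β * γ₂) * c₁ = 1 := by
        apply mul_left_cancel₀ hg0
        linear_combination hgc - α * ha₁ - (β * β₂) * hb₁ - (β * γ₂) * hc₁
      obtain ⟨p, q, hpq⟩ := hR a₁ b₁ c₁ (myEDR_span_triple_iff.mpr ⟨α, β * β₂, β * γ₂, combo1⟩)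
      obtain ⟨x, y, hxy⟩ := myEDR_span_pair_iff.mp hpq
      have hL : f x * (f a₁ * f p) + f y * (f b₁ * f p + f c₁ * f q) = 1 := by
        have := congrArg f hxy
        simpa only [map_add, map_mul, map_one] using this
      have hsol : MyEDRSol (f a₁) (f b₁) (f c₁) := ⟨f p, f q, f x, f y, hL⟩
      have hfg : IsUnit (f g) := by
        obtain ⟨e, he⟩ := hgt
        have h1 : IsUnit (f g * f e) := by
          rw [← map_mul, ← he]
          exact IsLocalization.map_units (Localization S) tS
        exact isUnit_of_mul_isUnit_left h1
      have s1 : MyEDRSol (f g * f a₁) (f g * f b₁) (f g * f c₁) := myEDR_sol_mul_all hfg hsol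
      have ea : f g * f a₁ = A' * f ↑sa := by rw [← map_mul, ← ha₁, ← hA]
      have eb : f g * f b₁ = B' * f ↑sb := by rw [← map_mul, ← hb₁, ← hB]
      have ec : f g * f c₁ = C' * f ↑sc := by rw [← map_mul, ← hc₁, ← hC]
      rw [ea, eb, ec] at s1
      have s2 : MyEDRSol A' B' C' :=
        myEDR_sol_of_mul_right
          (myEDR_sol_of_mul_mid (IsLocalization.map_units (Localization S) sb)
            (myEDR_sol_of_mul_left s1))
      obtain ⟨P, Q, X, Y, hfin⟩ := s2
      exact ⟨P, Q, myEDR_span_pair_iff.mpr ⟨X, Y, hfin⟩⟩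
  · -- backward: Localization EDR → R EDR
    intro hloc a b c habc
    obtain ⟨r, s, t, hrst⟩ := myEDR_span_triple_iff.mp habc
    have htopL : Ideal.span {f a, f b, f c} = ⊤ :=
      myEDR_span_triple_iff.mpr ⟨f r, f s, f t, by
        simpa only [map_add, map_mul, map_one] using congrArg f hrst⟩
    obtain ⟨P, Q, hPQ⟩ := hloc (f a) (f b) (f c) htopL
    obtain ⟨X, Y, hXY⟩ := myEDR_span_pair_iff.mp hPQ
    obtain ⟨⟨p₁, sp⟩, hP⟩ := IsLocalization.surj (M := S) P
    obtain ⟨⟨q₁, sq⟩, hQ⟩ := IsLocalization.surj (M := S) Q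
    have key1 : X * (f a * (f p₁ * f ↑sq)) + Y * (f b * (f p₁ * f ↑sq) + f c * (f q₁ * f ↑sp)) =
        f ↑sp * f ↑sq := by
      linear_combination (f ↑sp * f ↑sq) * hXY - ((X * f a + Y * f b) * f ↑sq) * hP -
        (Y * f c * f ↑sp) * hQ
    obtain ⟨⟨x₁, sx⟩, hX⟩ := IsLocalization.surj (M := S) X
    obtain ⟨⟨y₁, sy⟩, hY⟩ := IsLocalization.surj (M := S) Y
    have key2 : f (x₁ * ↑sy * (a * (p₁ * ↑sq)) + y₁ * ↑sx * (b * (p₁ * ↑sq) + c * (q₁ * ↑sp))) =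
        f (↑sx * ↑sy * (↑sp * ↑sq)) := by
      simp only [map_add, map_mul]
      linear_combination (f ↑sx * f ↑sy) * key1 - (f a * (f p₁ * f ↑sq) * f ↑sy) * hX -
        ((f b * (f p₁ * f ↑sq) + f c * (f q₁ * f ↑sp)) * f ↑sx) * hY
    obtain ⟨m, hm⟩ := (IsLocalization.eq_iff_exists (M := S) (S := Localization S)).mp key2
    set zS : S := m * (sx * sy * (sp * sq)) with hzS
    have hz : (↑m * (x₁ * ↑sy)) * (a * (p₁ * ↑sq)) +
        (↑m * (y₁ * ↑sx)) * (b * (p₁ * ↑sq) + c * (q₁ * ↑sp)) = (zS : R) := by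
      simp only [hzS, Submonoid.coe_mul]
      linear_combination hm
    by_cases hz0 : (zS : R) = 0
    · have h0S : (0 : R) ∈ S := hz0 ▸ zS.2
      have hsr0 : HasStableRange1 (R ⧸ Ideal.span ({(0 : R)} : Set R)) := (hS 0).mp h0S
      have hsra : HasStableRange1 (R ⧸ Ideal.span ({a} : Set R)) :=
        myEDR_sr1_factor (Ideal.span_singleton_le_span_singleton.mpr (dvd_zero a)) hsr0
      obtain ⟨lam, X', Y', hfin⟩ := myEDR_hint a b c hsra ⟨r, s, t, hrst⟩
      exact ⟨1, lam, myEDR_span_pair_iff.mpr ⟨X', Y', by linear_combination hfin⟩⟩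
    · have hsrz : HasStableRange1 (R ⧸ Ideal.span ({(zS : R)} : Set R)) := (hS _).mp zS.2
      exact myEDR_key a b c (p₁ * ↑sq) (q₁ * ↑sp) (zS : R)
        ⟨↑m * (x₁ * ↑sy), ↑m * (y₁ * ↑sx), hz⟩ hz0 hsrz ⟨r, s, t, hrst⟩
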